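/- arXiv:2007.14829 — 2 statements merged into one kernel-verified Lean document; each statement's English description precedes it below -/
import Mathlib

section
/- Fix a subset R ⊆ {1,…,m} with |R| = u. If 2u ≤ k, then there is no crossing circuit D ⊆ Ω with range(D) = R. If k + 1 ≤ 2u and u ≤ k, then the number of crossing circuits D ⊆ Ω with range(D) = R is at most (q+1)^{2u−k−1}. -/
open scoped Classical
noncomputable section

variable {F : Type} [Field F]

/-- Projective points of `F^k`. -/
abbrev Pt (F : Type) [Field F] (k : ℕ) := Projectivization F (Fin k → F)

/-- Linear span of a set of projective points. -/
def pspan {k : ℕ} (T : Set (Pt F k)) : Submodule F (Fin k → F) :=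
  ⨆ x ∈ T, x.submodule

/-- A finite set of projective points is dependent if the dimension of its linear span is
at most its cardinality minus one. -/
def Dep {k : ℕ} (T : Finset (Pt F k)) : Prop :=
  Module.finrank F (pspan (T : Set (Pt F k))) + 1 ≤ T.card

/-- A circuit is a dependent set that is minimal with respect to inclusion. -/
def IsCircuit {k : ℕ} (T : Finset (Pt F k)) : Prop :=
  Dep T ∧ ∀ T' ⊂ T, ¬ Dep T'

/-- A crossing circuit (for the line configuration `L`): a circuit contained in the union
of the lines which contains at most one point on each line. -/
def CrossingCircuit {k m : ℕ} (L : Fin m → Submodule F (Fin k → F))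
    (T : Finset (Pt F k)) : Prop :=
  IsCircuit T ∧ (∀ x ∈ T, ∃ i, x.submodule ≤ L i) ∧
    ∀ i, (T.filter fun x => x.submodule ≤ L i).card ≤ 1

section Helpers

variable {m k : ℕ} {P Q : Fin m → (Fin k → F)}

lemma choose_fun {α β : Type*} [Nonempty β] {R : Finset α} {p : α → β → Prop}
    (h : ∀ i ∈ R, ∃ x, p i x) : ∃ f : α → β, ∀ i ∈ R, p i (f i) :=
  ⟨fun i => if hi : i ∈ R then (h i hi).choose else Classical.arbitrary β,
   fun i hi => by simp only [dif_pos hi]; exact (h i hi).choose_spec⟩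

lemma pspan_eq {k : ℕ} (T : Set (Pt F k)) :
    pspan T = Submodule.span F (Projectivization.rep '' T) := by
  rw [Set.image_eq_iUnion, Submodule.span_iUnion₂]
  exact iSup_congr fun x => iSup_congr fun _ => Projectivization.submodule_eq x

lemma indepPQ
    (hgen : ∀ T : Finset (Fin m ⊕ Fin m), T.card ≤ k →
      LinearIndependent F (fun t : {x // x ∈ T} => Sum.elim P Q (t : Fin m ⊕ Fin m)))
    {S : Finset (Fin m)} (hS : 2 * S.card ≤ k) (c1 c2 : Fin m → F)
    (h : ∑ i ∈ S, (c1 i • P i + c2 i • Q i) = 0) :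
    ∀ i ∈ S, c1 i = 0 ∧ c2 i = 0 := by
  set T := S.disjSum S with hT
  have hTc : T.card ≤ k := by rw [hT, Finset.card_disjSum]; omega
  have li := hgen T hTc
  rw [Fintype.linearIndependent_iff] at li
  have key : ∀ t : {x // x ∈ T}, Sum.elim c1 c2 (t : Fin m ⊕ Fin m) = 0 := by
    apply li
    have : ∑ t : {x // x ∈ T}, Sum.elim c1 c2 (t : Fin m ⊕ Fin m) • Sum.elim P Q (t : Fin m ⊕ Fin m)
        = ∑ x ∈ T, Sum.elim c1 c2 x • Sum.elim P Q x :=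
      Finset.sum_coe_sort T (fun x => Sum.elim c1 c2 x • Sum.elim P Q x)
    rw [this, hT, Finset.sum_disjSum]
    simp only [Sum.elim_inl, Sum.elim_inr]
    rw [← Finset.sum_add_distrib]
    exact h
  intro i hi
  constructor
  · exact key ⟨Sum.inl i, Finset.inl_mem_disjSum.2 hi⟩
  · exact key ⟨Sum.inr i, Finset.inr_mem_disjSum.2 hi⟩

lemma line_disjoint (hk4 : 4 ≤ k)
    (hgen : ∀ T : Finset (Fin m ⊕ Fin m), T.card ≤ k →
      LinearIndependent F (fun t : {x // x ∈ T} => Sum.elim P Q (t : Fin m ⊕ Fin m)))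
    {i j : Fin m} (hij : i ≠ j) {v : Fin k → F}
    (hvi : v ∈ Submodule.span F {P i, Q i}) (hvj : v ∈ Submodule.span F {P j, Q j}) :
    v = 0 := by
  obtain ⟨a, b, hab⟩ := Submodule.mem_span_pair.1 hvi
  obtain ⟨c, d, hcd⟩ := Submodule.mem_span_pair.1 hvj
  set c1 : Fin m → F := fun l => if l = i then a else -c with hc1
  set c2 : Fin m → F := fun l => if l = i then b else -d with hc2
  have hsum : ∑ l ∈ ({i, j} : Finset (Fin m)), (c1 l • P l + c2 l • Q l) = 0 := by
    rw [Finset.sum_pair hij]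
    simp only [hc1, hc2, if_pos rfl, if_neg hij.symm]
    rw [hab]
    have : (-c) • P j + (-d) • Q j = -(c • P j + d • Q j) := by module
    rw [this, hcd]
    abel
  have hcards : 2 * ({i, j} : Finset (Fin m)).card ≤ k := by
    rw [Finset.card_pair hij]; omega
  have := indepPQ hgen hcards c1 c2 hsum i (by simp)
  simp only [hc1, hc2, if_pos rfl] at this
  rw [← hab, this.1, this.2, zero_smul, zero_smul, add_zero]

end Helpers

section Helpers2

variable {m k : ℕ} {P Q : Fin m → (Fin k → F)}

lemma rep_mem_line {L : Fin m → Submodule F (Fin k → F)} {x : Pt F k} {i : Fin m}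
    (h : x.submodule ≤ L i) : x.rep ∈ L i :=
  h (by rw [Projectivization.submodule_eq]; exact Submodule.mem_span_singleton_self _)

lemma extract (hk4 : 4 ≤ k)
    (hgen : ∀ T : Finset (Fin m ⊕ Fin m), T.card ≤ k →
      LinearIndependent F (fun t : {x // x ∈ T} => Sum.elim P Q (t : Fin m ⊕ Fin m)))
    {L : Fin m → Submodule F (Fin k → F)} (hL : ∀ i, L i = Submodule.span F {P i, Q i})
    {R : Finset (Fin m)} {D : Finset (Pt F k)}
    (hD : CrossingCircuit L D) (hR : ∀ i, i ∈ R ↔ ∃ x ∈ D, x.submodule ≤ L i) :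
    ∃ (xf : Fin m → Pt F k) (a b : Fin m → F),
      (∀ i ∈ R, xf i ∈ D ∧ (xf i).submodule ≤ L i ∧
        (xf i).rep = a i • P i + b i • Q i) ∧
      Set.InjOn xf ↑R ∧ D = R.image xf := by
  have hkpos : 0 < k := by omega
  haveI : Nonempty (Fin k) := ⟨⟨0, hkpos⟩⟩
  haveI : Nonempty (Pt F k) :=
    ⟨Projectivization.mk F (fun _ => 1)
      (fun h0 => one_ne_zero (congrFun h0 ⟨0, hkpos⟩))⟩
  have uniq : ∀ i : Fin m, ∀ x ∈ D, ∀ y ∈ D,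
      x.submodule ≤ L i → y.submodule ≤ L i → x = y := by
    intro i x hx y hy hx' hy'
    have := Finset.card_le_one.1 (hD.2.2 i)
    exact this x (Finset.mem_filter.2 ⟨hx, hx'⟩) y (Finset.mem_filter.2 ⟨hy, hy'⟩)
  obtain ⟨xf, hxf⟩ := choose_fun (R := R)
      (p := fun i x => x ∈ D ∧ Projectivization.submodule x ≤ L i)
      (fun i hi => (hR i).1 hi)
  obtain ⟨ab, hab⟩ := choose_fun (R := R)
      (p := fun i (p : F × F) => (xf i).rep = p.1 • P i + p.2 • Q i)
      (fun i hi => by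
        have : (xf i).rep ∈ L i := rep_mem_line (hxf i hi).2
        rw [hL i] at this
        obtain ⟨a, b, h⟩ := Submodule.mem_span_pair.1 this
        exact ⟨(a, b), h.symm⟩)
  refine ⟨xf, fun i => (ab i).1, fun i => (ab i).2, fun i hi => ⟨(hxf i hi).1, (hxf i hi).2, hab i hi⟩, ?_, ?_⟩
  · intro i hi j hj heq
    by_contra hij
    have h1 : (xf i).rep ∈ L i := rep_mem_line (hxf i hi).2
    have h2 : (xf i).rep ∈ L j := heq ▸ rep_mem_line (hxf j hj).2
    rw [hL i] at h1; rw [hL j] at h2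
    exact (xf i).rep_nonzero (line_disjoint hk4 hgen hij h1 h2)
  · ext x
    rw [Finset.mem_image]
    constructor
    · intro hx
      obtain ⟨i, hle⟩ := hD.2.1 x hx
      have hi : i ∈ R := (hR i).2 ⟨x, hx, hle⟩
      exact ⟨i, hi, (uniq i x hx (xf i) (hxf i hi).1 hle (hxf i hi).2).symm⟩
    · rintro ⟨i, hi, rfl⟩
      exact (hxf i hi).1

end Helpers2

section Helpers3

variable {m k : ℕ} {P Q : Fin m → (Fin k → F)}

lemma part1 (hk4 : 4 ≤ k)
    (hgen : ∀ T : Finset (Fin m ⊕ Fin m), T.card ≤ k →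
      LinearIndependent F (fun t : {x // x ∈ T} => Sum.elim P Q (t : Fin m ⊕ Fin m)))
    {L : Fin m → Submodule F (Fin k → F)} (hL : ∀ i, L i = Submodule.span F {P i, Q i})
    {R : Finset (Fin m)} {D : Finset (Pt F k)}
    (h2u : 2 * R.card ≤ k)
    (hD : CrossingCircuit L D) (hR : ∀ i, i ∈ R ↔ ∃ x ∈ D, x.submodule ≤ L i) :
    False := by
  obtain ⟨xf, a, b, hprop, hinj, himg⟩ := extract hk4 hgen hL hD hR
  set w : {i // i ∈ R} → (Fin k → F) := fun i => (xf ↑i).rep with hw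
  have li : LinearIndependent F w := by
    refine Fintype.linearIndependent_iff.2 fun g hg => ?_
    set gg : Fin m → F := fun i => if h : i ∈ R then g ⟨i, h⟩ else 0 with hgg
    have e1 : ∑ i ∈ R, gg i • (xf i).rep = 0 := by
      rw [← Finset.sum_coe_sort R (fun i => gg i • (xf i).rep), ← hg]
      refine Finset.sum_congr rfl fun i _ => ?_
      simp [hgg, hw]
    have hsum : ∑ i ∈ R, ((gg i * a i) • P i + (gg i * b i) • Q i) = 0 := by
      rw [← e1]
      refine Finset.sum_congr rfl fun i hi => ?_
      rw [(hprop i hi).2.2, smul_add, smul_smul, smul_smul]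
    have key := indepPQ hgen h2u _ _ hsum
    intro i
    by_contra hgi
    have hggi : gg ↑i = g i := by simp [hgg]
    have hab := key ↑i i.2
    have ha : a ↑i = 0 := by
      rcases mul_eq_zero.1 hab.1 with h | h
      · rw [hggi] at h; exact absurd h hgi
      · exact h
    have hb : b ↑i = 0 := by
      rcases mul_eq_zero.1 hab.2 with h | h
      · rw [hggi] at h; exact absurd h hgi
      · exact h
    apply (xf ↑i).rep_nonzero
    rw [(hprop ↑i i.2).2.2, ha, hb, zero_smul, zero_smul, add_zero]
  have hspan : pspan (D : Set (Pt F k)) = Submodule.span F (Set.range w) := by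
    rw [pspan_eq, himg, Finset.coe_image, Set.image_image, Set.image_eq_range]
    rfl
  have hfr : Module.finrank F (pspan (D : Set (Pt F k))) = R.card := by
    rw [hspan, finrank_span_eq_card li, Fintype.card_coe]
  have hcard : D.card = R.card := by
    rw [himg, Finset.card_image_of_injOn hinj]
  have := hD.1.1
  rw [Dep, hfr, hcard] at this
  omega

end Helpers3

section Helpers4

variable {m k : ℕ}

def phiMap (P Q : Fin m → (Fin k → F)) (R : Finset (Fin m)) :
    ({i // i ∈ R} → F × F) →ₗ[F] (Fin k → F) where
  toFun := fun l => ∑ i : {i // i ∈ R}, ((l i).1 • P ↑i + (l i).2 • Q ↑i)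
  map_add' := fun x y => by
    rw [← Finset.sum_add_distrib]
    refine Finset.sum_congr rfl fun i _ => ?_
    simp only [Pi.add_apply, Prod.fst_add, Prod.snd_add, add_smul]
    abel
  map_smul' := fun c x => by
    rw [RingHom.id_apply, Finset.smul_sum]
    refine Finset.sum_congr rfl fun i _ => ?_
    simp only [Pi.smul_apply, Prod.smul_fst, Prod.smul_snd, smul_eq_mul, smul_add, smul_smul]

variable {P Q : Fin m → (Fin k → F)}

lemma phiMap_apply (R : Finset (Fin m)) (l : {i // i ∈ R} → F × F) :
    phiMap P Q R l = ∑ i : {i // i ∈ R}, ((l i).1 • P ↑i + (l i).2 • Q ↑i) := rfl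

lemma phiMap_single (R : Finset (Fin m)) (j : {i // i ∈ R}) (p : F × F) :
    phiMap P Q R (Pi.single j p) = p.1 • P ↑j + p.2 • Q ↑j := by
  rw [phiMap_apply]
  rw [Finset.sum_eq_single j]
  · rw [Pi.single_eq_same]
  · intro i _ hij
    rw [Pi.single_eq_of_ne hij]
    simp
  · intro h
    exact absurd (Finset.mem_univ j) h

lemma phi_ker_finrank
    (hgen : ∀ T : Finset (Fin m ⊕ Fin m), T.card ≤ k →
      LinearIndependent F (fun t : {x // x ∈ T} => Sum.elim P Q (t : Fin m ⊕ Fin m)))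
    {R : Finset (Fin m)} (hcard : k ≤ 2 * R.card) :
    Module.finrank F (LinearMap.ker (phiMap P Q R)) = 2 * R.card - k := by
  obtain ⟨T', hT'sub, hT'card⟩ := Finset.exists_subset_card_eq (s := R.disjSum R) (n := k)
    (by rw [Finset.card_disjSum]; omega)
  have li := hgen T' (le_of_eq hT'card)
  have hsp : Submodule.span F (Sum.elim P Q '' ↑T') ≤ LinearMap.range (phiMap P Q R) := by
    rw [Submodule.span_le]
    rintro v ⟨t, ht, rfl⟩
    have ht' : t ∈ R.disjSum R := hT'sub ht
    rcases t with i | i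
    · have hi : i ∈ R := Finset.inl_mem_disjSum.1 ht'
      exact ⟨Pi.single ⟨i, hi⟩ ((1 : F), (0 : F)), by
        rw [phiMap_single]; simp⟩
    · have hi : i ∈ R := Finset.inr_mem_disjSum.1 ht'
      exact ⟨Pi.single ⟨i, hi⟩ ((0 : F), (1 : F)), by
        rw [phiMap_single]; simp⟩
  have hsp_eq : Submodule.span F (Sum.elim P Q '' ↑T')
      = Submodule.span F (Set.range fun t : {x // x ∈ T'} => Sum.elim P Q ↑t) := by
    rw [Set.image_eq_range]; rfl
  have hfr_span : Module.finrank F (Submodule.span F (Sum.elim P Q '' ↑T')) = k := by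
    rw [hsp_eq, finrank_span_eq_card li, Fintype.card_coe, hT'card]
  have h1 : Module.finrank F (LinearMap.range (phiMap P Q R)) = k := by
    refine le_antisymm ?_ ?_
    · have := Submodule.finrank_le (LinearMap.range (phiMap P Q R))
      rwa [Module.finrank_pi, Fintype.card_fin] at this
    · have h4 := Submodule.finrank_mono (M := Fin k → F) (R := F) hsp
      omega
  have h2 := LinearMap.finrank_range_add_finrank_ker (phiMap P Q R)
  have h3 : Module.finrank F ({i // i ∈ R} → F × F) = 2 * R.card := by
    rw [Module.finrank_pi_fintype]
    have : ∀ i : {i // i ∈ R}, Module.finrank F (F × F) = 2 := fun _ => by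
      rw [Module.finrank_prod, Module.finrank_self]
    simp only [Module.finrank_prod, Module.finrank_self, Finset.sum_const, smul_eq_mul,
      Fintype.card_coe] at *
    rw [Finset.card_univ, Fintype.card_coe]
    omega
  rw [h3] at h2
  omega

end Helpers4

section Helpers5

variable {m k : ℕ} {P Q : Fin m → (Fin k → F)}

def vecf (P Q : Fin m → (Fin k → F)) (R : Finset (Fin m)) (lam : {i // i ∈ R} → F × F)
    (i : {i // i ∈ R}) : Fin k → F := (lam i).1 • P ↑i + (lam i).2 • Q ↑i

lemma good_exists (hk4 : 4 ≤ k)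
    (hgen : ∀ T : Finset (Fin m ⊕ Fin m), T.card ≤ k →
      LinearIndependent F (fun t : {x // x ∈ T} => Sum.elim P Q (t : Fin m ⊕ Fin m)))
    {L : Fin m → Submodule F (Fin k → F)} (hL : ∀ i, L i = Submodule.span F {P i, Q i})
    {R : Finset (Fin m)} {D : Finset (Pt F k)}
    (hD : CrossingCircuit L D) (hR : ∀ i, i ∈ R ↔ ∃ x ∈ D, x.submodule ≤ L i)
    (i0s : {i // i ∈ R}) :
    ∃ lam : {i // i ∈ R} → F × F, phiMap P Q R lam = 0 ∧
      ((lam i0s).1 = 1 ∨ lam i0s = ((0 : F), (1 : F))) ∧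
      ∃ h : ∀ i, vecf P Q R lam i ≠ 0,
        D = Finset.image (fun i => Projectivization.mk F (vecf P Q R lam i) (h i))
          Finset.univ := by
  obtain ⟨xf, a, b, hprop, hinj, himg⟩ := extract hk4 hgen hL hD hR
  set w : {i // i ∈ R} → (Fin k → F) := fun i => (xf ↑i).rep with hw
  have hcardD : D.card = R.card := by rw [himg, Finset.card_image_of_injOn hinj]
  -- w is not linearly independent
  have hnli : ¬ LinearIndependent F w := by
    intro li
    have hspan : pspan (D : Set (Pt F k)) = Submodule.span F (Set.range w) := by
      rw [pspan_eq, himg, Finset.coe_image, Set.image_image, Set.image_eq_range]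
      rfl
    have := hD.1.1
    rw [Dep, hspan, finrank_span_eq_card li, Fintype.card_coe, hcardD] at this
    omega
  rw [Fintype.linearIndependent_iff] at hnli
  push_neg at hnli
  obtain ⟨g, hg0, j0, hj0⟩ := hnli
  -- all coefficients are nonzero
  have hall : ∀ i, g i ≠ 0 := by
    by_contra hc
    push_neg at hc
    obtain ⟨j, hj⟩ := hc
    set S : Finset {i // i ∈ R} := Finset.univ.filter (fun i => g i ≠ 0) with hS
    have hjS : j ∉ S := by simp [hS, hj]
    have hj0S : j0 ∈ S := by simp [hS, hj0]
    set xfs : {i // i ∈ R} → Pt F k := fun i => xf ↑i with hxfs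
    have hinj' : Set.InjOn xfs Set.univ := fun i _ i' _ heq =>
      Subtype.ext (hinj i.2 i'.2 heq)
    set D'' : Finset (Pt F k) := S.image xfs with hD''
    have hsub : D'' ⊆ D := by
      intro x hx
      rw [hD'', Finset.mem_image] at hx
      obtain ⟨i, _, rfl⟩ := hx
      exact (hprop ↑i i.2).1
    have hxfj : xfs j ∈ D := (hprop ↑j j.2).1
    have hnotin : xfs j ∉ D'' := by
      rw [hD'', Finset.mem_image]
      rintro ⟨i, hiS, heq⟩
      have : i = j := hinj' (Set.mem_univ i) (Set.mem_univ j) heq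
      subst this
      exact hjS hiS
    have hss : D'' ⊂ D := (Finset.ssubset_iff_of_subset hsub).2 ⟨xfs j, hxfj, hnotin⟩
    apply hD.1.2 D'' hss
    rw [Dep]
    have hcard'' : D''.card = S.card :=
      Finset.card_image_of_injOn (hinj'.mono (Set.subset_univ _))
    have hspan'' : pspan (D'' : Set (Pt F k))
        = Submodule.span F (Set.range fun i : {x // x ∈ S} => w ↑i) := by
      rw [pspan_eq, hD'', Finset.coe_image, Set.image_image, Set.image_eq_range]
      rfl
    have hsum0 : ∑ i : {x // x ∈ S}, g ↑i • w ↑i = 0 := by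
      have e1 : ∑ i : {x // x ∈ S}, g ↑i • w ↑i = ∑ i ∈ S, g i • w i :=
        Finset.sum_coe_sort S (fun i => g i • w i)
      have e2 : ∑ i ∈ S, g i • w i = ∑ i ∈ Finset.univ, g i • w i := by
        refine Finset.sum_subset (Finset.subset_univ S) fun i _ hiS => ?_
        have : g i = 0 := by
          by_contra hgi
          exact hiS (by simp [hS, hgi])
        rw [this, zero_smul]
      rw [e1, e2, hg0]
    have hnli'' : ¬ LinearIndependent F (fun i : {x // x ∈ S} => w ↑i) := by
      intro li2
      rw [Fintype.linearIndependent_iff] at li2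
      exact hj0 (li2 (fun i => g ↑i) hsum0 ⟨j0, hj0S⟩)
    have hle : Module.finrank F
        (Submodule.span F (Set.range fun i : {x // x ∈ S} => w ↑i)) ≤ S.card := by
      have := finrank_range_le_card (R := F) (fun i : {x // x ∈ S} => w ↑i)
      rwa [Fintype.card_coe] at this
    have hneq : Module.finrank F
        (Submodule.span F (Set.range fun i : {x // x ∈ S} => w ↑i)) ≠ S.card := by
      intro he
      apply hnli''
      rw [linearIndependent_iff_card_eq_finrank_span, Fintype.card_coe]
      exact he.symm
    have hSpos : 0 < S.card := Finset.card_pos.2 ⟨j0, hj0S⟩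
    rw [hspan'', hcard'']
    omega
  -- build lam'
  set lam' : {i // i ∈ R} → F × F := fun i => (g i * a ↑i, g i * b ↑i) with hlam'
  have hphi' : phiMap P Q R lam' = 0 := by
    rw [phiMap_apply]
    have : ∀ i : {i // i ∈ R},
        (lam' i).1 • P ↑i + (lam' i).2 • Q ↑i = g i • w i := fun i => by
      rw [hw]
      simp only [hlam']
      rw [(hprop ↑i i.2).2.2]
      module
    rw [Finset.sum_congr rfl fun i _ => this i]
    exact hg0
  have hnz0 : lam' i0s ≠ 0 := by
    intro h0
    have h1 : g i0s * a ↑i0s = 0 := congrArg Prod.fst h0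
    have h2 : g i0s * b ↑i0s = 0 := congrArg Prod.snd h0
    have ha : a ↑i0s = 0 := by
      rcases mul_eq_zero.1 h1 with h | h
      · exact absurd h (hall i0s)
      · exact h
    have hb : b ↑i0s = 0 := by
      rcases mul_eq_zero.1 h2 with h | h
      · exact absurd h (hall i0s)
      · exact h
    apply (xf ↑i0s).rep_nonzero
    rw [(hprop ↑i0s i0s.2).2.2, ha, hb, zero_smul, zero_smul, add_zero]
  -- main construction for any nonzero scalar t
  have main : ∀ t : F, t ≠ 0 → phiMap P Q R (t • lam') = 0 ∧
      ∃ h : ∀ i, vecf P Q R (t • lam') i ≠ 0,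
        D = Finset.image (fun i => Projectivization.mk F (vecf P Q R (t • lam') i) (h i))
          Finset.univ := by
    intro t ht
    have hvec : ∀ i, vecf P Q R (t • lam') i = (t * g i) • w i := fun i => by
      unfold vecf
      simp only [Pi.smul_apply, Prod.smul_fst, Prod.smul_snd, smul_eq_mul, hlam', hw]
      rw [(hprop ↑i i.2).2.2]
      module
    have hnzv : ∀ i, vecf P Q R (t • lam') i ≠ 0 := fun i => by
      rw [hvec i]
      exact smul_ne_zero (mul_ne_zero ht (hall i)) (xf ↑i).rep_nonzero
    refine ⟨by rw [map_smul, hphi', smul_zero], hnzv, ?_⟩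
    have hmk : ∀ i : {i // i ∈ R},
        Projectivization.mk F (vecf P Q R (t • lam') i) (hnzv i) = xf ↑i := fun i => by
      conv_rhs => rw [← Projectivization.mk_rep (xf ↑i)]
      rw [Projectivization.mk_eq_mk_iff']
      exact ⟨t * g i, (hvec i).symm⟩
    have himg2 : Finset.image xf R = Finset.image (fun i : {i // i ∈ R} => xf ↑i) R.attach := by
      ext y
      simp only [Finset.mem_image, Finset.mem_attach, true_and, Subtype.exists]
      constructor
      · rintro ⟨i, hi, rfl⟩; exact ⟨i, hi, rfl⟩
      · rintro ⟨i, hi, rfl⟩; exact ⟨i, hi, rfl⟩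
    rw [himg, Finset.image_congr (fun i _ => hmk i), Finset.univ_eq_attach]
    exact himg2
  by_cases hfst : (lam' i0s).1 ≠ 0
  · obtain ⟨h1, h2⟩ := main ((lam' i0s).1)⁻¹ (inv_ne_zero hfst)
    refine ⟨_, h1, Or.inl ?_, h2⟩
    simp only [Pi.smul_apply, Prod.smul_fst, smul_eq_mul]
    exact inv_mul_cancel₀ hfst
  · push_neg at hfst
    have hsnd : (lam' i0s).2 ≠ 0 := by
      intro h0
      exact hnz0 (Prod.ext hfst h0)
    obtain ⟨h1, h2⟩ := main ((lam' i0s).2)⁻¹ (inv_ne_zero hsnd)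
    refine ⟨_, h1, Or.inr ?_, h2⟩
    have : (((lam' i0s).2)⁻¹ • lam') i0s = ((lam' i0s).2⁻¹ * (lam' i0s).1, (lam' i0s).2⁻¹ * (lam' i0s).2) := rfl
    rw [this, hfst, mul_zero, inv_mul_cancel₀ hsnd]

end Helpers5

section Helpers6

variable {m k : ℕ} {P Q : Fin m → (Fin k → F)}

lemma NN_nonzero {p : F × F} (hp : p.1 = 1 ∨ p = ((0 : F), (1 : F))) : p ≠ 0 := by
  rcases hp with h | h
  · intro h0; rw [h0] at h; exact one_ne_zero h.symm
  · intro h0; rw [h0] at h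
    exact one_ne_zero (congrArg Prod.snd h).symm

lemma NN_unique {p p' : F × F} (hp : p.1 = 1 ∨ p = ((0 : F), (1 : F)))
    (hp' : p'.1 = 1 ∨ p' = ((0 : F), (1 : F))) {c : F} (hc : c • p = p') : p' = p := by
  have h1 : c * p.1 = p'.1 := congrArg Prod.fst hc
  have h2 : c * p.2 = p'.2 := congrArg Prod.snd hc
  rcases hp with ha | ha <;> rcases hp' with hb | hb
  · rw [ha, mul_one] at h1
    rw [← hc, h1, hb, one_smul]
  · exfalso
    rw [hb] at h1 h2
    simp only at h1 h2
    rw [ha, mul_one] at h1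
    rw [h1, zero_mul] at h2
    exact one_ne_zero h2.symm
  · exfalso
    have : p.1 = 0 := by rw [ha]
    rw [this, mul_zero] at h1
    rw [hb] at h1
    simp at h1
  · rw [hb, ha]

lemma NN_inter_ncard_le_one {S : Submodule F (F × F)} (hfr : Module.finrank F S ≤ 1) :
    ({p : F × F | p.1 = 1 ∨ p = ((0 : F), (1 : F))} ∩ (S : Set (F × F))).ncard ≤ 1 := by
  have hss : Set.Subsingleton
      ({p : F × F | p.1 = 1 ∨ p = ((0 : F), (1 : F))} ∩ (S : Set (F × F))) := by
    intro p hp p' hp'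
    have hp0 : p ≠ 0 := NN_nonzero hp.1
    have hsp : Submodule.span F {p} ≤ S := by
      rw [Submodule.span_le, Set.singleton_subset_iff]
      exact hp.2
    have h1 : Module.finrank F (Submodule.span F ({p} : Set (F × F))) = 1 :=
      finrank_span_singleton hp0
    have hfr1 : Module.finrank F S = 1 := by
      have := Submodule.finrank_mono (M := F × F) (R := F) hsp
      omega
    have heq : Submodule.span F ({p} : Set (F × F)) = S :=
      Submodule.eq_of_le_of_finrank_eq hsp (by rw [h1, hfr1])
    have : p' ∈ Submodule.span F ({p} : Set (F × F)) := heq ▸ hp'.2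
    obtain ⟨c, hc⟩ := Submodule.mem_span_singleton.1 this
    exact (NN_unique hp.1 hp'.1 hc).symm
  rcases hss.eq_empty_or_singleton with h | ⟨x, h⟩ <;> rw [h] <;>
    simp [Set.ncard_singleton]

lemma NN_ncard [Fintype F] :
    ({p : F × F | p.1 = 1 ∨ p = ((0 : F), (1 : F))}).ncard ≤ Fintype.card F + 1 := by
  have hsub : {p : F × F | p.1 = 1 ∨ p = ((0 : F), (1 : F))}
      ⊆ insert ((0 : F), (1 : F)) (Set.range fun x : F => ((1 : F), x)) := by
    rintro p (hp | hp)
    · exact Set.mem_insert_of_mem _ ⟨p.2, by rw [← hp]⟩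
    · rw [hp]; exact Set.mem_insert _ _
  calc ({p : F × F | p.1 = 1 ∨ p = ((0 : F), (1 : F))}).ncard
      ≤ (insert ((0 : F), (1 : F)) (Set.range fun x : F => ((1 : F), x))).ncard :=
        Set.ncard_le_ncard hsub (Set.toFinite _)
    _ ≤ (Set.range fun x : F => ((1 : F), x)).ncard + 1 := Set.ncard_insert_le _ _
    _ ≤ Fintype.card F + 1 := by
        have : (Set.range fun x : F => ((1 : F), x)) = (fun x : F => ((1 : F), x)) '' Set.univ := by
          rw [Set.image_univ]
        rw [this]
        have h2 := Set.ncard_image_le (f := fun x : F => ((1 : F), x)) (s := Set.univ)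
          (Set.toFinite _)
        rw [Set.ncard_univ, Nat.card_eq_fintype_card] at h2
        omega

end Helpers6

section Helpers7

variable {m k : ℕ} {P Q : Fin m → (Fin k → F)}

def recover (P Q : Fin m → (Fin k → F)) (R : Finset (Fin m)) [Nonempty (Pt F k)]
    (lam : {i // i ∈ R} → F × F) : Finset (Pt F k) :=
  Finset.univ.image (fun i => if h : vecf P Q R lam i ≠ 0
    then Projectivization.mk F (vecf P Q R lam i) h else Classical.arbitrary _)

lemma recover_eq [Nonempty (Pt F k)] {R : Finset (Fin m)} {lam : {i // i ∈ R} → F × F}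
    (h : ∀ i, vecf P Q R lam i ≠ 0) :
    recover P Q R lam
      = Finset.univ.image (fun i => Projectivization.mk F (vecf P Q R lam i) (h i)) := by
  unfold recover
  exact Finset.image_congr fun i _ => dif_pos (h i)

set_option maxHeartbeats 1000000 in
lemma part2 [Fintype F] (hk4 : 4 ≤ k)
    (hgen : ∀ T : Finset (Fin m ⊕ Fin m), T.card ≤ k →
      LinearIndependent F (fun t : {x // x ∈ T} => Sum.elim P Q (t : Fin m ⊕ Fin m)))
    {L : Fin m → Submodule F (Fin k → F)} (hL : ∀ i, L i = Submodule.span F {P i, Q i})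
    {R : Finset (Fin m)} (hk1 : k + 1 ≤ 2 * R.card) :
    {D : Finset (Pt F k) | CrossingCircuit L D ∧
        (∀ i, i ∈ R ↔ ∃ x ∈ D, x.submodule ≤ L i)}.ncard
      ≤ (Fintype.card F + 1) ^ (2 * R.card - k - 1) := by
  classical
  have hkpos : 0 < k := by omega
  haveI : Nonempty (Fin k) := ⟨⟨0, hkpos⟩⟩
  haveI : Nonempty (Pt F k) :=
    ⟨Projectivization.mk F (fun _ => 1) (fun h0 => one_ne_zero (congrFun h0 ⟨0, hkpos⟩))⟩
  set q := Fintype.card F with hq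
  have hq1 : 1 ≤ q := Fintype.card_pos
  have hRne : R.Nonempty := Finset.card_pos.1 (by omega)
  obtain ⟨i0, hi0⟩ := hRne
  set i0s : {i // i ∈ R} := ⟨i0, hi0⟩ with hi0s
  set W := LinearMap.ker (phiMap P Q R) with hW
  set π : W →ₗ[F] F × F := (LinearMap.proj i0s).comp W.subtype with hπ
  set NN : Set (F × F) := {p | p.1 = 1 ∨ p = ((0 : F), (1 : F))} with hNN
  set Scirc := {D : Finset (Pt F k) | CrossingCircuit L D ∧
      (∀ i, i ∈ R ↔ ∃ x ∈ D, x.submodule ≤ L i)} with hScirc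
  -- dimension of W
  have hWfr : Module.finrank F W = 2 * R.card - k := phi_ker_finrank hgen (by omega)
  have hd1 : 1 ≤ 2 * R.card - k := by omega
  -- rank-nullity for π
  have hrn : Module.finrank F (LinearMap.range π) + Module.finrank F (LinearMap.ker π)
      = 2 * R.card - k := by
    rw [← hWfr]
    exact LinearMap.finrank_range_add_finrank_ker π
  have hrle : Module.finrank F (LinearMap.range π) ≤ 2 := by
    have := Submodule.finrank_le (LinearMap.range π)
    rw [Module.finrank_prod, Module.finrank_self] at this
    omega
  -- the section
  set σ : F × F → W := fun n => if h : ∃ w' : W, π w' = n then h.choose else 0 with hσdef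
  have hσ : ∀ n : F × F, (∃ w' : W, π w' = n) → π (σ n) = n := fun n hn => by
    rw [hσdef]; simp only [dif_pos hn]; exact hn.choose_spec
  -- choose lambdas for circuits
  have hex : ∀ D : Scirc, ∃ lam : {i // i ∈ R} → F × F, phiMap P Q R lam = 0 ∧
      ((lam i0s).1 = 1 ∨ lam i0s = ((0 : F), (1 : F))) ∧
      ∃ h : ∀ i, vecf P Q R lam i ≠ 0,
        (D : Finset (Pt F k)) = Finset.univ.image
          (fun i => Projectivization.mk F (vecf P Q R lam i) (h i)) :=
    fun D => good_exists hk4 hgen hL D.2.1 D.2.2 i0s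
  choose lamf hker hnorm hrec using hex
  have hrecov : ∀ D : Scirc, (D : Finset (Pt F k)) = recover P Q R (lamf D) := fun D => by
    obtain ⟨h, hE⟩ := hrec D
    rw [hE, recover_eq h]
  -- the injection
  set wD : Scirc → W := fun D => ⟨lamf D, LinearMap.mem_ker.2 (hker D)⟩ with hwD
  have hπwD : ∀ D : Scirc, π (wD D) = lamf D i0s := fun D => rfl
  set Tgt := {p : F × F // p ∈ NN ∩ (LinearMap.range π : Set (F × F))} ×
    (LinearMap.ker π) with hTgt
  set f : Scirc → Tgt := fun D =>
    (⟨π (wD D), ⟨by rw [hπwD]; exact hnorm D, ⟨wD D, rfl⟩⟩⟩,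
     ⟨wD D - σ (π (wD D)), by
        rw [LinearMap.mem_ker, map_sub, hσ _ ⟨wD D, rfl⟩, sub_self]⟩) with hf
  have hfinj : Function.Injective f := by
    intro D D' heq
    have h1 : π (wD D) = π (wD D') := Subtype.ext_iff.1 (congrArg Prod.fst heq)
    have h2 : wD D - σ (π (wD D)) = wD D' - σ (π (wD D')) :=
      Subtype.ext_iff.1 (congrArg Prod.snd heq)
    rw [h1] at h2
    have h3 : wD D = wD D' := by rwa [sub_left_inj] at h2
    have h4 : lamf D = lamf D' := congrArg Subtype.val h3
    have h5 : (D : Finset (Pt F k)) = (D' : Finset (Pt F k)) := by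
      rw [hrecov D, hrecov D', h4]
    exact Subtype.ext h5
  -- counting
  have hcount : Scirc.ncard ≤ (NN ∩ (LinearMap.range π : Set (F × F))).ncard
      * Nat.card (LinearMap.ker π) := by
    rw [← Nat.card_coe_set_eq]
    calc Nat.card Scirc ≤ Nat.card Tgt := Nat.card_le_card_of_injective f hfinj
      _ = (NN ∩ (LinearMap.range π : Set (F × F))).ncard * Nat.card (LinearMap.ker π) := by
          rw [hTgt, Nat.card_prod, Nat.card_coe_set_eq]
  have hkercard : Nat.card (LinearMap.ker π)
      = q ^ Module.finrank F (LinearMap.ker π) := by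
    haveI : Fintype (LinearMap.ker π) := Fintype.ofFinite _
    rw [Nat.card_eq_fintype_card]
    exact Module.card_eq_pow_finrank (K := F) (V := LinearMap.ker π)
  rcases (by omega : Module.finrank F (LinearMap.range π) = 0
      ∨ Module.finrank F (LinearMap.range π) = 1
      ∨ Module.finrank F (LinearMap.range π) = 2) with hr | hr | hr
  · -- rank 0 : no valid lambda, set is empty
    have hbot : LinearMap.range π = ⊥ := by
      rw [← Submodule.finrank_eq_zero (R := F)]
      exact hr
    have hempty : (NN ∩ (LinearMap.range π : Set (F × F))) = ∅ := by
      ext p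
      simp only [Set.mem_inter_iff, Set.mem_empty_iff_false, iff_false, not_and]
      intro hpN hpr
      rw [hbot] at hpr
      exact NN_nonzero hpN (by simpa using hpr)
    rw [hempty] at hcount
    simp only [Set.ncard_empty, zero_mul] at hcount
    omega
  · -- rank 1
    have h1 := NN_inter_ncard_le_one (S := LinearMap.range π) (le_of_eq hr)
    have hkfr : Module.finrank F (LinearMap.ker π) = 2 * R.card - k - 1 := by omega
    calc Scirc.ncard ≤ 1 * (q ^ (2 * R.card - k - 1)) := by
          rw [← hkfr, ← hkercard]
          exact hcount.trans (Nat.mul_le_mul_right _ h1)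
      _ ≤ (q + 1) ^ (2 * R.card - k - 1) := by
          rw [one_mul]
          exact Nat.pow_le_pow_left (by omega) _
  · -- rank 2
    have h1 : (NN ∩ (LinearMap.range π : Set (F × F))).ncard ≤ q + 1 :=
      le_trans (Set.ncard_le_ncard Set.inter_subset_left (Set.toFinite _)) NN_ncard
    have hkfr : Module.finrank F (LinearMap.ker π) = 2 * R.card - k - 2 := by omega
    have hd2 : 2 ≤ 2 * R.card - k := by omega
    calc Scirc.ncard ≤ (q + 1) * (q ^ (2 * R.card - k - 2)) := by
          rw [← hkfr, ← hkercard]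
          exact hcount.trans (Nat.mul_le_mul_right _ h1)
      _ ≤ (q + 1) * ((q + 1) ^ (2 * R.card - k - 2)) :=
          Nat.mul_le_mul_left _ (Nat.pow_le_pow_left (by omega) _)
      _ = (q + 1) ^ (2 * R.card - k - 2 + 1) := by rw [pow_succ, mul_comm]
      _ = (q + 1) ^ (2 * R.card - k - 1) := by congr 1; omega

end Helpers7

/-- for a fixed set `R` of `u` lines, if `2u ≤ k` there is no crossing
circuit with range `R`, and if `k + 1 ≤ 2u ≤ 2k` the number of crossing circuits with
range `R` is at most `(q+1)^(2u-k-1)`. -/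
theorem statement11 [Fintype F] {m k : ℕ} (hm : 2 ≤ m) (hk4 : 4 ≤ k) (hkm : k + 1 ≤ 2 * m)
    (P Q : Fin m → (Fin k → F))
    (hgen : ∀ T : Finset (Fin m ⊕ Fin m), T.card ≤ k →
      LinearIndependent F (fun t : {x // x ∈ T} => Sum.elim P Q (t : Fin m ⊕ Fin m)))
    (L : Fin m → Submodule F (Fin k → F))
    (hL : ∀ i, L i = Submodule.span F {P i, Q i})
    (R : Finset (Fin m)) (u : ℕ) (hu : R.card = u) :
    (2 * u ≤ k → ¬ ∃ D : Finset (Pt F k), CrossingCircuit L D ∧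
        (∀ i, i ∈ R ↔ ∃ x ∈ D, x.submodule ≤ L i)) ∧
    (k + 1 ≤ 2 * u → u ≤ k →
      {D : Finset (Pt F k) | CrossingCircuit L D ∧
          (∀ i, i ∈ R ↔ ∃ x ∈ D, x.submodule ≤ L i)}.ncard
        ≤ (Fintype.card F + 1) ^ (2 * u - k - 1)) := by
  subst hu
  constructor
  · rintro h2u ⟨D, hD, hR⟩
    exact part1 hk4 hgen hL h2u hD hR
  · intro hk1 _
    exact part2 hk4 hgen hL hk1
end
end

section
/- Let c, α > 0 be real numbers with p = c·Q^{−α} satisfying 0 < p < 1. Then: (a) for each i ∈ {1,…,m}, E[V_i] = c·Q^{1−α}; and (b) for each integer u with ⌈(k+1)/2⌉ ≤ u ≤ m, setting j = 2u − k, E[X_u] ≤ c^j · (m! / (j!·(u−j)!·(m−u)!)) · Q^{(1−α)·j − 1}. -/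
open scoped Classical
noncomputable section

variable {F : Type} [Field F]

/-- Weight of the subset `Γ` of `ΩF` under the product Bernoulli(`p`) measure on the
subsets of `ΩF`. -/
def bwt (p : ℝ) {k : ℕ} (ΩF Γ : Finset (Pt F k)) : ℝ :=
  p ^ Γ.card * (1 - p) ^ (ΩF.card - Γ.card)

/-- Expectation of the random variable `Y` under the product Bernoulli(`p`) measure `μ_p`
on the subsets of `ΩF`. -/
def expec (p : ℝ) {k : ℕ} (ΩF : Finset (Pt F k)) (Y : Finset (Pt F k) → ℝ) : ℝ :=
  ∑ Γ ∈ ΩF.powerset, bwt p ΩF Γ * Y Γ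

/-- Probability of the event `E` under the product Bernoulli(`p`) measure `μ_p` on the
subsets of `ΩF`. -/
def prob (p : ℝ) {k : ℕ} (ΩF : Finset (Pt F k)) (E : Finset (Pt F k) → Prop) : ℝ :=
  ∑ Γ ∈ ΩF.powerset.filter E, bwt p ΩF Γ

/-- `V_i(Γ)`: the number of points of `Γ` on the line `L`. -/
def Vline {k : ℕ} (L : Submodule F (Fin k → F)) (Γ : Finset (Pt F k)) : ℕ :=
  (Γ.filter fun x => x.submodule ≤ L).card

/-- `X_u(Γ)`: the number of pairs `(D, J)` with `D ⊆ Ω` a crossing circuit of size `u` and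
`J ⊆ D ∩ Γ` of size `2u - k`. -/
def Xu {k m : ℕ} (L : Fin m → Submodule F (Fin k → F)) (u : ℕ)
    (Γ : Finset (Pt F k)) : ℕ :=
  Set.ncard {DJ : Finset (Pt F k) × Finset (Pt F k) |
    CrossingCircuit L DJ.1 ∧ DJ.1.card = u ∧
    DJ.2 ⊆ DJ.1 ∩ Γ ∧ DJ.2.card = 2 * u - k}

/-- `X = ∑_{u = ⌈(k+1)/2⌉}^{m} X_u`. -/
def Xtot {k m : ℕ} (L : Fin m → Submodule F (Fin k → F)) (Γ : Finset (Pt F k)) : ℕ :=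
  ∑ u ∈ Finset.Icc ((k + 2) / 2) m, Xu L u Γ


section Aux
open Finset Projectivization

-- ===== probability lemmas =====

lemma sum_bern_one {α : Type*} (p : ℝ) (s : Finset α) :
    ∑ Γ ∈ s.powerset, p ^ Γ.card * (1 - p) ^ (s.card - Γ.card) = 1 := by
  induction s using Finset.induction with
  | empty => simp
  | insert a s ha ih =>
    rw [Finset.sum_powerset_insert ha]
    have h1 : ∀ Γ ∈ s.powerset, p ^ Γ.card * (1 - p) ^ ((insert a s).card - Γ.card)
        = (1 - p) * (p ^ Γ.card * (1 - p) ^ (s.card - Γ.card)) := by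
      intro Γ hΓ
      rw [Finset.card_insert_of_notMem ha]
      have : s.card + 1 - Γ.card = (s.card - Γ.card) + 1 := by
        have := Finset.card_le_card (Finset.mem_powerset.1 hΓ)
        omega
      rw [this, pow_succ]
      ring
    have h2 : ∀ Γ ∈ s.powerset,
        p ^ (insert a Γ).card * (1 - p) ^ ((insert a s).card - (insert a Γ).card)
        = p * (p ^ Γ.card * (1 - p) ^ (s.card - Γ.card)) := by
      intro Γ hΓ
      have haΓ : a ∉ Γ := fun h => ha (Finset.mem_powerset.1 hΓ h)
      rw [Finset.card_insert_of_notMem ha, Finset.card_insert_of_notMem haΓ]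
      have : s.card + 1 - (Γ.card + 1) = s.card - Γ.card := by omega
      rw [this, pow_succ]
      ring
    rw [Finset.sum_congr rfl h1, Finset.sum_congr rfl h2, ← Finset.mul_sum, ← Finset.mul_sum, ih]
    ring

lemma sum_bern_subset {α : Type*} (p : ℝ) (s J : Finset α) (hJ : J ⊆ s) :
    ∑ Γ ∈ s.powerset.filter (fun Γ => J ⊆ Γ), p ^ Γ.card * (1 - p) ^ (s.card - Γ.card)
      = p ^ J.card := by
  have key : ∑ Γ ∈ s.powerset.filter (fun Γ => J ⊆ Γ), p ^ Γ.card * (1 - p) ^ (s.card - Γ.card)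
      = ∑ Γ' ∈ (s \ J).powerset, p ^ (Γ' ∪ J).card * (1 - p) ^ (s.card - (Γ' ∪ J).card) := by
    refine Finset.sum_nbij' (fun Γ => Γ \ J) (fun Γ' => Γ' ∪ J) ?_ ?_ ?_ ?_ ?_
    · intro Γ hΓ
      simp only [Finset.mem_filter, Finset.mem_powerset] at hΓ
      exact Finset.mem_powerset.2 (Finset.sdiff_subset_sdiff hΓ.1 (Finset.Subset.refl _))
    · intro Γ' hΓ'
      simp only [Finset.mem_powerset] at hΓ'
      refine Finset.mem_filter.2 ⟨Finset.mem_powerset.2 ?_, Finset.subset_union_right⟩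
      exact Finset.union_subset (hΓ'.trans (Finset.sdiff_subset)) hJ
    · intro Γ hΓ
      simp only [Finset.mem_filter, Finset.mem_powerset] at hΓ
      show Γ \ J ∪ J = Γ
      rw [Finset.sdiff_union_self_eq_union, Finset.union_eq_left.2 hΓ.2]
    · intro Γ' hΓ'
      simp only [Finset.mem_powerset] at hΓ'
      show (Γ' ∪ J) \ J = Γ'
      rw [Finset.union_sdiff_right, Finset.sdiff_eq_self_iff_disjoint.2]
      exact Finset.disjoint_left.2 fun x hx =>
        (Finset.mem_sdiff.1 (hΓ' hx)).2
    · intro Γ hΓ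
      simp only [Finset.mem_filter, Finset.mem_powerset] at hΓ
      have h : Γ \ J ∪ J = Γ := by
        rw [Finset.sdiff_union_self_eq_union, Finset.union_eq_left.2 hΓ.2]
      simp only [h]
  rw [key]
  have hcard : ∀ Γ' ∈ (s \ J).powerset, (Γ' ∪ J).card = Γ'.card + J.card := by
    intro Γ' hΓ'
    rw [Finset.card_union_of_disjoint]
    exact Finset.disjoint_left.2 fun x hx =>
      (Finset.mem_sdiff.1 (Finset.mem_powerset.1 hΓ' hx)).2
  have hsd : (s \ J).card = s.card - J.card := Finset.card_sdiff_of_subset hJ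
  have hone := sum_bern_one p (s \ J)
  calc ∑ Γ' ∈ (s \ J).powerset, p ^ (Γ' ∪ J).card * (1 - p) ^ (s.card - (Γ' ∪ J).card)
      = ∑ Γ' ∈ (s \ J).powerset,
          p ^ J.card * (p ^ Γ'.card * (1 - p) ^ ((s \ J).card - Γ'.card)) := by
        refine Finset.sum_congr rfl fun Γ' hΓ' => ?_
        rw [hcard Γ' hΓ', pow_add, hsd]
        have h1 : Γ'.card ≤ s.card - J.card := by
          have h := Finset.card_le_card (Finset.mem_powerset.1 hΓ')
          omega
        have h2 : J.card ≤ s.card := Finset.card_le_card hJ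
        have h3 : s.card - (Γ'.card + J.card) = s.card - J.card - Γ'.card := by omega
        rw [h3]
        ring
    _ = p ^ J.card := by rw [← Finset.mul_sum, hone, mul_one]

lemma expec_count {α β : Type*} (p : ℝ) (s : Finset α) (T : Finset β) (g : β → Finset α)
    (hsub : ∀ t ∈ T, g t ⊆ s) :
    ∑ Γ ∈ s.powerset, (p ^ Γ.card * (1 - p) ^ (s.card - Γ.card)) *
        (∑ t ∈ T, if g t ⊆ Γ then (1:ℝ) else 0)
      = ∑ t ∈ T, p ^ (g t).card := by
  simp_rw [Finset.mul_sum]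
  rw [Finset.sum_comm]
  refine Finset.sum_congr rfl fun t ht => ?_
  rw [← sum_bern_subset p s (g t) (hsub t ht), Finset.sum_filter]
  refine Finset.sum_congr rfl fun Γ hΓ => ?_
  by_cases h : g t ⊆ Γ <;> simp [h]

-- ===== integer/nat geometric bound =====

lemma geom_bound_int (q : ℤ) (hq : 1 ≤ q) : ∀ j : ℕ, q ^ (j + 1) - 1 ≤ (q - 1) * (q + 1) ^ j := by
  intro j
  induction j with
  | zero => simp
  | succ j ih =>
    have h1 : (q ^ (j + 1) - 1) * (q + 1) ≤ (q - 1) * (q + 1) ^ j * (q + 1) :=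
      mul_le_mul_of_nonneg_right ih (by linarith)
    have h2 : q ≤ q ^ (j + 1) := le_self_pow₀ hq (by omega)
    have h3 : (q - 1) * (q + 1) ^ (j + 1) = (q - 1) * (q + 1) ^ j * (q + 1) := by ring
    have h4 : (q ^ (j + 1) - 1) * (q + 1) = q ^ (j + 1) * q + q ^ (j + 1) - q - 1 := by ring
    have h5 : q ^ (j + 1 + 1) = q ^ (j + 1) * q := by ring
    linarith

lemma geom_bound (q j : ℕ) (hq : 1 ≤ q) (hj : 1 ≤ j) :
    q ^ j - 1 ≤ (q - 1) * (q + 1) ^ (j - 1) := by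
  have h5 : 1 ≤ q ^ j := Nat.one_le_pow _ _ (by omega)
  zify [h5, hq]
  have hkey := geom_bound_int (q : ℤ) (by exact_mod_cast hq) (j - 1)
  have hj1 : j - 1 + 1 = j := by omega
  rw [hj1] at hkey
  push_cast
  exact hkey

-- ===== dependence / relations =====

lemma pspan_eq_span {k : ℕ} (D : Finset (Pt F k)) :
    pspan (D : Set (Pt F k)) = Submodule.span F (Set.range fun x : ↥D => (x : Pt F k).rep) := by
  rw [Submodule.span_range_eq_iSup]
  unfold pspan
  rw [iSup_subtype']
  exact iSup_congr fun x => (x : Pt F k).submodule_eq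

lemma dep_iff {k : ℕ} (D : Finset (Pt F k)) :
    Dep D ↔ ¬ LinearIndependent F (fun x : ↥D => (x : Pt F k).rep) := by
  rw [linearIndependent_iff_card_eq_finrank_span]
  unfold Dep
  rw [pspan_eq_span]
  have hle : (Set.range fun x : ↥D => (x : Pt F k).rep).finrank F ≤ Fintype.card ↥D :=
    finrank_range_le_card _
  unfold Set.finrank at *
  rw [Fintype.card_coe] at *
  omega

lemma dep_of_rel {k : ℕ} (D : Finset (Pt F k)) (g : Pt F k → F)
    (hsum : ∑ x ∈ D, g x • x.rep = 0) (hne : ∃ x ∈ D, g x ≠ 0) : Dep D := by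
  rw [dep_iff, Fintype.not_linearIndependent_iff]
  refine ⟨fun x => g x, ?_, ?_⟩
  · rw [← hsum, ← Finset.sum_coe_sort D (fun x => g x • x.rep)]
  · obtain ⟨x, hx, hgx⟩ := hne
    exact ⟨⟨x, hx⟩, hgx⟩

lemma rel_of_dep {k : ℕ} (D : Finset (Pt F k)) (hD : Dep D) :
    ∃ g : Pt F k → F, (∑ x ∈ D, g x • x.rep = 0) ∧ ∃ x ∈ D, g x ≠ 0 := by
  rw [dep_iff, Fintype.not_linearIndependent_iff] at hD
  obtain ⟨g0, hsum, ⟨x0, hx0⟩⟩ := hD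
  refine ⟨fun x => if hx : x ∈ D then g0 ⟨x, hx⟩ else 0, ?_, ⟨x0, x0.2, by simp [x0.2, hx0]⟩⟩
  rw [← Finset.sum_coe_sort D]
  rw [← hsum]
  exact Finset.sum_congr rfl fun x _ => by simp [x.2]

lemma circuit_rel_support {k : ℕ} (D : Finset (Pt F k)) (hC : IsCircuit D) (g : Pt F k → F)
    (hsum : ∑ x ∈ D, g x • x.rep = 0) (hne : ∃ x ∈ D, g x ≠ 0) :
    ∀ x ∈ D, g x ≠ 0 := by
  intro y hy hgy
  set D' := D.filter (fun x => g x ≠ 0) with hD'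
  have hss : D' ⊂ D := by
    refine Finset.ssubset_iff_of_subset (Finset.filter_subset _ _) |>.2 ⟨y, hy, ?_⟩
    simp [hD', hgy, hy]
  refine hC.2 D' hss (dep_of_rel D' g ?_ ?_)
  · rw [hD', Finset.sum_filter_of_ne, hsum]
    intro x _ h hg
    exact h (by rw [hg, zero_smul])
  · obtain ⟨x, hx, hgx⟩ := hne
    exact ⟨x, Finset.mem_filter.2 ⟨hx, hgx⟩, hgx⟩

-- ===== good relations for crossing circuits =====

def GoodRel {k m : ℕ} (P Q : Fin m → Fin k → F) (ρ : Pt F k → Fin m) (S : Finset (Fin m))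
    (D : Finset (Pt F k)) (w : (↥S ⊕ ↥S) → F) : Prop :=
  ∀ x ∈ D, ∃ (hx : ρ x ∈ S) (cx : F), cx ≠ 0 ∧
    w (Sum.inl ⟨ρ x, hx⟩) • P (ρ x) + w (Sum.inr ⟨ρ x, hx⟩) • Q (ρ x) = cx • x.rep

lemma cc_injOn {k m : ℕ} {L : Fin m → Submodule F (Fin k → F)} {ρ : Pt F k → Fin m}
    (hρ : ∀ x, (∃ i, x.submodule ≤ L i) → x.submodule ≤ L (ρ x))
    {D : Finset (Pt F k)} (hD : CrossingCircuit L D) :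
    ∀ x ∈ D, ∀ y ∈ D, ρ x = ρ y → x = y := by
  intro x hx y hy hxy
  have h1 : x ∈ D.filter (fun z => z.submodule ≤ L (ρ x)) :=
    Finset.mem_filter.2 ⟨hx, hρ x (hD.2.1 x hx)⟩
  have h2 : y ∈ D.filter (fun z => z.submodule ≤ L (ρ x)) := by
    refine Finset.mem_filter.2 ⟨hy, ?_⟩
    rw [hxy]
    exact hρ y (hD.2.1 y hy)
  exact Finset.card_le_one.1 (hD.2.2 (ρ x)) x h1 y h2

lemma exists_good {k m u : ℕ} (L : Fin m → Submodule F (Fin k → F))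
    (P Q : Fin m → Fin k → F) (hL : ∀ i, L i = Submodule.span F {P i, Q i})
    (ρ : Pt F k → Fin m)
    (hρ : ∀ x, (∃ i, x.submodule ≤ L i) → x.submodule ≤ L (ρ x))
    (S : Finset (Fin m)) (D : Finset (Pt F k)) (hD : CrossingCircuit L D)
    (hcard : D.card = u) (himg : D.image ρ = S) (hu : 0 < u) :
    ∃ w : (↥S ⊕ ↥S) → F,
      Fintype.linearCombination F (Sum.elim (fun i : ↥S => P i) (fun i : ↥S => Q i)) w = 0 ∧
      w ≠ 0 ∧ GoodRel P Q ρ S D w := by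
  obtain ⟨g, hsum, hne⟩ := rel_of_dep D hD.1.1
  have hfull := circuit_rel_support D hD.1 g hsum hne
  have hinj := cc_injOn hρ hD
  have hco : ∀ x ∈ D, ∃ ab : F × F, ab.1 • P (ρ x) + ab.2 • Q (ρ x) = x.rep := by
    intro x hx
    have h1 : x.rep ∈ L (ρ x) := by
      have h := hρ x (hD.2.1 x hx)
      rw [Projectivization.submodule_eq, Submodule.span_singleton_le_iff_mem] at h
      exact h
    rw [hL] at h1
    obtain ⟨a, b, hab⟩ := Submodule.mem_span_pair.1 h1
    exact ⟨(a, b), hab⟩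
  set co : Pt F k → F × F := fun x => if hx : x ∈ D then (hco x hx).choose else 0 with hcodef
  have hcospec : ∀ x ∈ D, (co x).1 • P (ρ x) + (co x).2 • Q (ρ x) = x.rep := by
    intro x hx
    simp only [hcodef, dif_pos hx]
    exact (hco x hx).choose_spec
  have hfib : ∀ x ∈ D, D.filter (fun y => ρ y = ρ x) = {x} := by
    intro x hx
    ext y
    simp only [Finset.mem_filter, Finset.mem_singleton]
    constructor
    · rintro ⟨hy, hxy⟩
      exact hinj y hy x hx hxy
    · rintro rfl
      exact ⟨hx, rfl⟩
  refine ⟨Sum.elim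
    (fun i : ↥S => ∑ x ∈ D.filter (fun x => ρ x = ↑i), g x * (co x).1)
    (fun i : ↥S => ∑ x ∈ D.filter (fun x => ρ x = ↑i), g x * (co x).2), ?_, ?_, ?_⟩
  · rw [Fintype.linearCombination_apply, Fintype.sum_sum_type]
    simp only [Sum.elim_inl, Sum.elim_inr]
    have hkey : ∀ i : ↥S,
        (∑ x ∈ D.filter (fun x => ρ x = ↑i), g x * (co x).1) • P ↑i
          + (∑ x ∈ D.filter (fun x => ρ x = ↑i), g x * (co x).2) • Q ↑i
        = ∑ x ∈ D.filter (fun x => ρ x = ↑i), g x • x.rep := by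
      intro i
      rw [Finset.sum_smul, Finset.sum_smul, ← Finset.sum_add_distrib]
      refine Finset.sum_congr rfl fun x hx => ?_
      obtain ⟨hxD, hρx⟩ := Finset.mem_filter.1 hx
      rw [← hρx, mul_smul, mul_smul, ← smul_add, hcospec x hxD]
    rw [← Finset.sum_add_distrib]
    rw [Finset.sum_congr rfl fun i _ => hkey i]
    rw [Finset.sum_coe_sort S (fun i => ∑ x ∈ D.filter (fun x => ρ x = i), g x • x.rep)]
    rw [Finset.sum_fiberwise_of_maps_to (fun x hx => himg ▸ Finset.mem_image_of_mem ρ hx)]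
    exact hsum
  · intro hw0
    obtain ⟨x0, hx0⟩ := Finset.card_pos.1 (hcard ▸ hu)
    have hx0S : ρ x0 ∈ S := himg ▸ Finset.mem_image_of_mem ρ hx0
    have h1 : (∑ x ∈ D.filter (fun x => ρ x = ρ x0), g x * (co x).1) = 0 := by
      have := congrFun hw0 (Sum.inl ⟨ρ x0, hx0S⟩)
      simpa using this
    have h2 : (∑ x ∈ D.filter (fun x => ρ x = ρ x0), g x * (co x).2) = 0 := by
      have := congrFun hw0 (Sum.inr ⟨ρ x0, hx0S⟩)
      simpa using this
    rw [hfib x0 hx0, Finset.sum_singleton] at h1 h2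
    have hrep : g x0 • x0.rep = 0 := by
      rw [← hcospec x0 hx0]
      rw [smul_add, smul_smul, smul_smul, h1, h2]
      simp
    exact smul_ne_zero (hfull x0 hx0) (Projectivization.rep_nonzero x0) hrep
  · intro x hx
    have hxS : ρ x ∈ S := himg ▸ Finset.mem_image_of_mem ρ hx
    refine ⟨hxS, g x, hfull x hx, ?_⟩
    simp only [Sum.elim_inl, Sum.elim_inr]
    rw [hfib x hx, Finset.sum_singleton, Finset.sum_singleton]
    rw [mul_smul, mul_smul, ← smul_add, hcospec x hx]

lemma good_rel_det {k m u : ℕ} (P Q : Fin m → Fin k → F) (ρ : Pt F k → Fin m)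
    (S : Finset (Fin m)) (D D' : Finset (Pt F k)) (hcard : D.card = u) (hcard' : D'.card = u)
    (himg' : D'.image ρ = S) (w w' : (↥S ⊕ ↥S) → F) (t : F) (ht : t ≠ 0)
    (hw : GoodRel P Q ρ S D w) (hw' : GoodRel P Q ρ S D' w') (heq : w' = t • w) :
    D = D' := by
  have hsub : D ⊆ D' := by
    intro x hx
    obtain ⟨hxS, c, hc, hcomb⟩ := hw x hx
    have hmem : ρ x ∈ D'.image ρ := himg' ▸ hxS
    obtain ⟨x', hx'D', hρx'⟩ := Finset.mem_image.1 hmem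
    obtain ⟨hx'S, c', hc', hcomb'⟩ := hw' x' hx'D'
    simp only [hρx'] at hcomb'
    rw [heq] at hcomb'
    simp only [Pi.smul_apply, smul_eq_mul] at hcomb'
    have hkey : c' • x'.rep = (t * c) • x.rep := by
      rw [← hcomb']
      rw [← smul_smul t c, ← hcomb, smul_add, smul_smul, smul_smul]
    have hx'eq : x' = x := by
      conv_lhs => rw [← Projectivization.mk_rep x']
      conv_rhs => rw [← Projectivization.mk_rep x]
      rw [Projectivization.mk_eq_mk_iff']
      refine ⟨c'⁻¹ * (t * c), ?_⟩
      rw [mul_smul, ← hkey, smul_smul, inv_mul_cancel₀ hc', one_smul]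
    rwa [← hx'eq]
  exact Finset.eq_of_subset_of_card_le hsub (by omega)

-- ===== kernel dimension =====

lemma ker_rank {m k u : ℕ}
    (P Q : Fin m → (Fin k → F))
    (hgen : ∀ T : Finset (Fin m ⊕ Fin m), T.card ≤ k →
      LinearIndependent F (fun t : {x // x ∈ T} => Sum.elim P Q (t : Fin m ⊕ Fin m)))
    (S : Finset (Fin m)) (hS : S.card = u) (hku : k + 1 ≤ 2 * u) :
    Module.finrank F (LinearMap.ker
      (Fintype.linearCombination F
        (Sum.elim (fun i : ↥S => P i) (fun i : ↥S => Q i)))) = 2 * u - k := by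
  set ψ := Fintype.linearCombination F
      (Sum.elim (fun i : ↥S => P i) (fun i : ↥S => Q i)) with hψ
  have hdom : Module.finrank F ((↥S ⊕ ↥S) → F) = 2 * u := by
    rw [Module.finrank_pi, Fintype.card_sum, Fintype.card_coe, hS]
    omega
  have hsurj : LinearMap.range ψ = ⊤ := by
    have h2u : k ≤ (S.image Sum.inl ∪ S.image Sum.inr : Finset (Fin m ⊕ Fin m)).card := by
      rw [Finset.card_union_of_disjoint, Finset.card_image_of_injective _ Sum.inl_injective,
        Finset.card_image_of_injective _ Sum.inr_injective, hS]
      · omega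
      · refine Finset.disjoint_left.2 fun t ht1 ht2 => ?_
        obtain ⟨i, _, rfl⟩ := Finset.mem_image.1 ht1
        obtain ⟨i', _, h⟩ := Finset.mem_image.1 ht2
        exact Sum.inl_ne_inr h.symm
    obtain ⟨T, hTsub, hTcard⟩ := Finset.exists_subset_card_eq h2u
    have hind := hgen T (le_of_eq hTcard)
    have hspan : Submodule.span F (Set.range fun t : {x // x ∈ T} =>
        Sum.elim P Q (t : Fin m ⊕ Fin m)) = ⊤ := by
      apply Submodule.eq_top_of_finrank_eq
      rw [finrank_span_eq_card hind, Fintype.card_coe, hTcard, Module.finrank_pi,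
        Fintype.card_fin]
    rw [eq_top_iff, ← hspan]
    rw [Submodule.span_le]
    rintro _ ⟨t, rfl⟩
    have htT : (t : Fin m ⊕ Fin m)
        ∈ (S.image Sum.inl ∪ S.image Sum.inr : Finset (Fin m ⊕ Fin m)) := hTsub t.2
    rw [Finset.mem_union] at htT
    rcases htT with h | h
    · obtain ⟨i, hi, hit⟩ := Finset.mem_image.1 h
      refine ⟨Pi.single (Sum.inl ⟨i, hi⟩) (1 : F), ?_⟩
      rw [hψ, Fintype.linearCombination_apply_single, one_smul]
      simp [← hit]
    · obtain ⟨i, hi, hit⟩ := Finset.mem_image.1 h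
      refine ⟨Pi.single (Sum.inr ⟨i, hi⟩) (1 : F), ?_⟩
      rw [hψ, Fintype.linearCombination_apply_single, one_smul]
      simp [← hit]
  have hrn := LinearMap.finrank_range_add_finrank_ker ψ
  rw [hsurj, finrank_top, Module.finrank_pi, Fintype.card_fin, hdom] at hrn
  omega

-- ===== counting circuits with a fixed line set =====

lemma circS_bound [Fintype F] {k m u : ℕ} (hu : 0 < u) (hku : k + 1 ≤ 2 * u)
    (P Q : Fin m → (Fin k → F))
    (hgen : ∀ T : Finset (Fin m ⊕ Fin m), T.card ≤ k →
      LinearIndependent F (fun t : {x // x ∈ T} => Sum.elim P Q (t : Fin m ⊕ Fin m)))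
    (L : Fin m → Submodule F (Fin k → F)) (hL : ∀ i, L i = Submodule.span F {P i, Q i})
    (ρ : Pt F k → Fin m)
    (hρ : ∀ x, (∃ i, x.submodule ≤ L i) → x.submodule ≤ L (ρ x))
    (S : Finset (Fin m)) (hS : S.card = u)
    (C : Finset (Finset (Pt F k)))
    (hC : ∀ D ∈ C, CrossingCircuit L D ∧ D.card = u ∧ D.image ρ = S) :
    C.card * (Fintype.card F - 1) ≤ Fintype.card F ^ (2 * u - k) - 1 := by
  set ψ := Fintype.linearCombination F
      (Sum.elim (fun i : ↥S => P i) (fun i : ↥S => Q i)) with hψ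
  set K := LinearMap.ker ψ with hK
  have hcardK : Fintype.card K = Fintype.card F ^ (2 * u - k) := by
    rw [Module.card_eq_pow_finrank (K := F) (V := K), ker_rank P Q hgen S hS hku]
  have hgood : ∀ D : ↥C, ∃ w : (↥S ⊕ ↥S) → F, ψ w = 0 ∧ w ≠ 0 ∧ GoodRel P Q ρ S D.1 w :=
    fun D => exists_good L P Q hL ρ hρ S D.1 (hC D.1 D.2).1 (hC D.1 D.2).2.1
      (hC D.1 D.2).2.2 hu
  choose wf hker hne hgoodrel using hgood
  have hΦmem : ∀ (D : ↥C) (t : {t : F // t ≠ 0}), t.1 • wf D ∈ K := by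
    intro D t
    rw [hK, LinearMap.mem_ker, map_smul, hker D, smul_zero]
  set Φ : ↥C × {t : F // t ≠ 0} → {w : ↥K // w ≠ (0 : K)} :=
    fun Dt => ⟨⟨Dt.2.1 • wf Dt.1, hΦmem Dt.1 Dt.2⟩, by
      intro h
      rw [Submodule.mk_eq_zero] at h
      exact hne Dt.1 (by
        rcases smul_eq_zero.1 h with h' | h'
        · exact absurd h' Dt.2.2
        · exact h'.symm ▸ rfl)⟩ with hΦ
  have hinj : Function.Injective Φ := by
    rintro ⟨D, t⟩ ⟨D', t'⟩ h
    rw [hΦ] at h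
    simp only [Subtype.mk_eq_mk] at h
    have heq : t.1 • wf D = t'.1 • wf D' := h
    have hDD' : D.1 = D'.1 := by
      refine good_rel_det P Q ρ S D.1 D'.1 (hC D.1 D.2).2.1 (hC D'.1 D'.2).2.1
        (hC D'.1 D'.2).2.2 (wf D) (wf D') (t'.1⁻¹ * t.1)
        (mul_ne_zero (inv_ne_zero t'.2) t.2) (hgoodrel D) (hgoodrel D') ?_
      rw [mul_smul, heq, smul_smul, inv_mul_cancel₀ t'.2, one_smul]
    have hD : D = D' := Subtype.ext hDD'
    subst hD
    have ht : t = t' := by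
      have h2 : (t.1 - t'.1) • wf D = 0 := by
        rw [sub_smul, heq, sub_self]
      rcases smul_eq_zero.1 h2 with h' | h'
      · exact Subtype.ext (sub_eq_zero.1 h')
      · exact absurd h' (hne D)
    rw [ht]
  have hcard := Fintype.card_le_of_injective Φ hinj
  have h1 : Fintype.card (↥C × {t : F // t ≠ 0}) = C.card * (Fintype.card F - 1) := by
    rw [Fintype.card_prod, Fintype.card_coe]
    congr 1
    rw [Fintype.card_subtype_compl (p := fun t : F => t = 0), Fintype.card_subtype_eq]
  have h2 : Fintype.card {w : ↥K // w ≠ (0 : K)} = Fintype.card F ^ (2 * u - k) - 1 := by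
    rw [Fintype.card_subtype_compl (p := fun w : ↥K => w = 0), Fintype.card_subtype_eq, hcardK]
  omega

-- ===== counting points on a line =====

lemma line_count [Fintype F] {k : ℕ} (hk : 0 < k) (W : Submodule F (Fin k → F))
    (hW : Module.finrank F W = 2) (Ωi : Finset (Pt F k))
    (hΩi : ∀ x : Pt F k, x ∈ Ωi ↔ x.submodule ≤ W) :
    Ωi.card = Fintype.card F + 1 := by
  set q := Fintype.card F with hq
  have hq2 : 2 ≤ q := Fintype.one_lt_card
  have hjunkv : (fun _ => (1 : F) : Fin k → F) ≠ 0 := by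
    intro h
    have := congrFun h ⟨0, hk⟩
    simp at this
  set φ : (Fin k → F) → Pt F k :=
    fun v => if h : v ≠ 0 then Projectivization.mk F v h else Projectivization.mk F _ hjunkv
    with hφ
  set Vs := Finset.univ.filter (fun v : Fin k → F => v ∈ W ∧ v ≠ 0) with hVs
  have hVscard : Vs.card = q ^ 2 - 1 := by
    have h1 : Vs = (Finset.univ.filter (fun v : Fin k → F => v ∈ W)).erase 0 := by
      ext v
      simp only [hVs, Finset.mem_filter, Finset.mem_erase, Finset.mem_univ, true_and]
      tauto
    rw [h1, Finset.card_erase_of_mem (by simp [Submodule.zero_mem])]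
    have h2 : (Finset.univ.filter (fun v : Fin k → F => v ∈ W)).card = Fintype.card W :=
      (Fintype.card_subtype _).symm
    rw [h2, Module.card_eq_pow_finrank (K := F) (V := W), hW, hq]
  have hmaps : ∀ v ∈ Vs, φ v ∈ Ωi := by
    intro v hv
    rw [hVs, Finset.mem_filter] at hv
    obtain ⟨-, hvW, hv0⟩ := hv
    rw [hφ]
    simp only [dif_pos hv0]
    rw [hΩi, Projectivization.submodule_mk, Submodule.span_singleton_le_iff_mem]
    exact hvW
  have hfi := Finset.card_eq_sum_card_fiberwise hmaps
  have hfib : ∀ x ∈ Ωi, (Vs.filter (fun v => φ v = x)).card = q - 1 := by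
    intro x hx
    have hrep : x.rep ∈ W := by
      rw [hΩi, Projectivization.submodule_eq, Submodule.span_singleton_le_iff_mem] at hx
      exact hx
    have h1 : Vs.filter (fun v => φ v = x)
        = (Finset.univ.filter (fun t : F => t ≠ 0)).image (fun t => t • x.rep) := by
      ext v
      simp only [Finset.mem_filter, Finset.mem_image, Finset.mem_univ, true_and, hVs]
      constructor
      · rintro ⟨⟨hvW, hv0⟩, hφv⟩
        rw [hφ] at hφv
        simp only [dif_pos hv0] at hφv
        rw [← Projectivization.mk_rep x, Projectivization.mk_eq_mk_iff'] at hφv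
        obtain ⟨a, ha⟩ := hφv
        refine ⟨a, ?_, ha⟩
        intro ha0
        rw [ha0, zero_smul] at ha
        exact hv0 ha.symm
      · rintro ⟨t, ht0, rfl⟩
        have hne : t • x.rep ≠ 0 := smul_ne_zero ht0 (Projectivization.rep_nonzero x)
        refine ⟨⟨Submodule.smul_mem _ _ hrep, hne⟩, ?_⟩
        rw [hφ]
        simp only [dif_pos hne]
        conv_rhs => rw [← Projectivization.mk_rep x]
        rw [Projectivization.mk_eq_mk_iff']
        exact ⟨t, rfl⟩
    rw [h1, Finset.card_image_of_injOn, Finset.filter_ne']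
    · rw [Finset.card_erase_of_mem (Finset.mem_univ 0), Finset.card_univ]
    · intro t _ t' _ htt
      have htt' : t • x.rep = t' • x.rep := htt
      have hz : (t - t') • x.rep = 0 := by rw [sub_smul, htt', sub_self]
      rcases smul_eq_zero.1 hz with h | h
      · exact sub_eq_zero.1 h
      · exact absurd h (Projectivization.rep_nonzero x)
  rw [Finset.sum_congr rfl hfib, Finset.sum_const, smul_eq_mul] at hfi
  have hsq' : ∀ n : ℕ, 2 ≤ n → (n + 1) * (n - 1) = n ^ 2 - 1 := by
    intro n hn
    obtain ⟨r, rfl⟩ : ∃ r, n = r + 2 := ⟨n - 2, by omega⟩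
    have e1 : (r + 2 + 1) * (r + 2 - 1) = r * r + 4 * r + 3 := by
      have h : r + 2 - 1 = r + 1 := by omega
      rw [h]; ring
    have e2 : (r + 2) ^ 2 = r * r + 4 * r + 4 := by ring
    omega
  have hsq := hsq' q hq2
  have hfin : Ωi.card * (q - 1) = (q + 1) * (q - 1) := by omega
  exact Nat.eq_of_mul_eq_mul_right (by omega) hfin

-- ===== rank of a line =====

lemma span_pair_rank {m k : ℕ} (P Q : Fin m → (Fin k → F))
    (hgen : ∀ T : Finset (Fin m ⊕ Fin m), T.card ≤ k →
      LinearIndependent F (fun t : {x // x ∈ T} => Sum.elim P Q (t : Fin m ⊕ Fin m)))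
    (hk2 : 2 ≤ k) (i : Fin m) :
    Module.finrank F (Submodule.span F {P i, Q i}) = 2 := by
  set T : Finset (Fin m ⊕ Fin m) := {Sum.inl i, Sum.inr i} with hT
  have hTcard : T.card = 2 := by
    rw [hT, Finset.card_insert_of_notMem (by simp), Finset.card_singleton]
  have hind := hgen T (hTcard ▸ hk2)
  have hsp : Submodule.span F {P i, Q i}
      = Submodule.span F (Set.range fun t : {x // x ∈ T} =>
          Sum.elim P Q (t : Fin m ⊕ Fin m)) := by
    congr 1
    ext v
    simp only [Set.mem_range, Subtype.exists, hT]
    constructor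
    · rintro (rfl | h)
      · exact ⟨Sum.inl i, by simp, rfl⟩
      · rw [Set.mem_singleton_iff] at h
        exact ⟨Sum.inr i, by simp, by simp [h]⟩
    · rintro ⟨t, ht, rfl⟩
      simp only [Finset.mem_insert, Finset.mem_singleton] at ht
      rcases ht with rfl | rfl
      · left; rfl
      · right; rfl
  rw [hsp, finrank_span_eq_card hind, Fintype.card_coe, hTcard]

end Aux

/-- for `p = c·Q^{-α}`, (a) `E[V_i] = c·Q^{1-α}` for each line, and
(b) `E[X_u] ≤ c^j · m!/(j!(u-j)!(m-u)!) · Q^{(1-α)j - 1}` where `j = 2u - k`, for each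
`u` with `⌈(k+1)/2⌉ ≤ u ≤ m`. -/
theorem statement13 [Fintype F] {m k s : ℕ} (hm : 2 ≤ m) (hk4 : 4 ≤ k)
    (hkm : k + 1 ≤ 2 * m) (hmk : m ≤ k) (hs : k + s = 2 * m)
    (P Q : Fin m → (Fin k → F))
    (hgen : ∀ T : Finset (Fin m ⊕ Fin m), T.card ≤ k →
      LinearIndependent F (fun t : {x // x ∈ T} => Sum.elim P Q (t : Fin m ⊕ Fin m)))
    (L : Fin m → Submodule F (Fin k → F))
    (hL : ∀ i, L i = Submodule.span F {P i, Q i})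
    (ΩF : Finset (Pt F k)) (hΩF : ∀ x, x ∈ ΩF ↔ ∃ i, x.submodule ≤ L i)
    (Qr : ℝ) (hQr : Qr = (Fintype.card F : ℝ) + 1)
    (c α : ℝ) (hc : 0 < c) (hα : 0 < α)
    (p : ℝ) (hp : p = c * Qr ^ (-α)) (hp0 : 0 < p) (hp1 : p < 1) :
    (∀ i, expec p ΩF (fun Γ => (Vline (L i) Γ : ℝ)) = c * Qr ^ (1 - α)) ∧
    (∀ u : ℕ, k + 1 ≤ 2 * u → u ≤ m →
      expec p ΩF (fun Γ => (Xu L u Γ : ℝ)) ≤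
        c ^ (2 * u - k) *
          ((m.factorial : ℝ) /
            (((2 * u - k).factorial : ℝ) * ((u - (2 * u - k)).factorial : ℝ) *
              ((m - u).factorial : ℝ))) *
          Qr ^ ((1 - α) * ((2 * u - k : ℕ) : ℝ) - 1)) := by
  have hq2 : 2 ≤ Fintype.card F := Fintype.one_lt_card
  have hQrpos : (0:ℝ) < Qr := by
    rw [hQr]
    positivity
  have hbern : ∀ J : Finset (Pt F k), J ⊆ ΩF →
      ∑ Γ ∈ ΩF.powerset.filter (fun Γ => J ⊆ Γ),
        p ^ Γ.card * (1 - p) ^ (ΩF.card - Γ.card) = p ^ J.card :=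
    fun J hJ => sum_bern_subset p ΩF J hJ
  constructor
  · -- part (a)
    intro i
    have hrank2 : Module.finrank F (L i) = 2 := by
      rw [hL i]
      exact span_pair_rank P Q hgen (by omega) i
    set Ωi := ΩF.filter (fun x => x.submodule ≤ L i) with hΩidef
    have hΩimem : ∀ x : Pt F k, x ∈ Ωi ↔ x.submodule ≤ L i := by
      intro x
      rw [hΩidef, Finset.mem_filter]
      exact ⟨fun h => h.2, fun h => ⟨(hΩF x).2 ⟨i, h⟩, h⟩⟩
    have hcount : Ωi.card = Fintype.card F + 1 :=
      line_count (by omega) (L i) hrank2 Ωi hΩimem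
    have hVeq : ∀ Γ ∈ ΩF.powerset, (Vline (L i) Γ : ℝ)
        = ∑ x ∈ Ωi, (if ({x} : Finset (Pt F k)) ⊆ Γ then (1:ℝ) else 0) := by
      intro Γ hΓ
      rw [Finset.mem_powerset] at hΓ
      have h1 : Γ.filter (fun x => x.submodule ≤ L i) = Ωi.filter (fun x => x ∈ Γ) := by
        ext x
        simp only [Finset.mem_filter, hΩidef]
        exact ⟨fun h => ⟨⟨hΓ h.1, h.2⟩, h.1⟩, fun h => ⟨h.2, h.1.2⟩⟩
      rw [Vline, h1, Finset.card_filter]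
      push_cast
      refine Finset.sum_congr rfl fun x _ => ?_
      by_cases h : x ∈ Γ <;> simp [h, Finset.singleton_subset_iff]
    have hE : expec p ΩF (fun Γ => (Vline (L i) Γ : ℝ))
        = ∑ x ∈ Ωi, p ^ ({x} : Finset (Pt F k)).card := by
      simp only [expec, bwt]
      rw [Finset.sum_congr rfl (fun Γ hΓ => by rw [hVeq Γ hΓ])]
      exact expec_count p ΩF Ωi (fun x => {x})
        (fun x hx => Finset.singleton_subset_iff.2 (Finset.mem_filter.1 hx).1)
    rw [hE]
    simp only [Finset.card_singleton, pow_one, Finset.sum_const, nsmul_eq_mul]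
    rw [hcount, hp]
    push_cast
    rw [← hQr]
    rw [show (1:ℝ) - α = 1 + (-α) from by ring, Real.rpow_add hQrpos, Real.rpow_one]
    ring
  · -- part (b)
    intro u hu1 hu2
    set j := 2 * u - k with hjdef
    have hj1 : 1 ≤ j := by omega
    have hju : j ≤ u := by omega
    have hu0 : 0 < u := by omega
    set ρ : Pt F k → Fin m :=
      fun x => if h : ∃ i, x.submodule ≤ L i then h.choose else ⟨0, by omega⟩ with hρdef
    have hρ : ∀ x : Pt F k, (∃ i, x.submodule ≤ L i) → x.submodule ≤ L (ρ x) := by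
      intro x h
      rw [hρdef]
      simp only [dif_pos h]
      exact h.choose_spec
    set Circ := ΩF.powerset.filter (fun D => CrossingCircuit L D ∧ D.card = u) with hCircdef
    set Pairs := (ΩF.powerset ×ˢ ΩF.powerset).filter
        (fun DJ => CrossingCircuit L DJ.1 ∧ DJ.1.card = u ∧ DJ.2 ⊆ DJ.1 ∧ DJ.2.card = j)
      with hPairsdef
    -- Xu as a sum of indicators
    have hXueq : ∀ Γ ∈ ΩF.powerset,
        (Xu L u Γ : ℝ) = ∑ DJ ∈ Pairs, (if DJ.2 ⊆ Γ then (1:ℝ) else 0) := by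
      intro Γ hΓ
      rw [Finset.mem_powerset] at hΓ
      have hset : {DJ : Finset (Pt F k) × Finset (Pt F k) |
          CrossingCircuit L DJ.1 ∧ DJ.1.card = u ∧
          DJ.2 ⊆ DJ.1 ∩ Γ ∧ DJ.2.card = 2 * u - k}
          = ↑(Pairs.filter (fun DJ => DJ.2 ⊆ Γ)) := by
        ext DJ
        simp only [Set.mem_setOf_eq, Finset.coe_filter, Finset.mem_filter, hPairsdef,
          Finset.mem_product, Finset.mem_powerset, Finset.subset_inter_iff]
        constructor
        · rintro ⟨hcc, hcard, ⟨hJD, hJΓ⟩, hJcard⟩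
          have hDΩ : DJ.1 ⊆ ΩF := fun x hx => (hΩF x).2 (hcc.2.1 x hx)
          exact ⟨⟨⟨hDΩ, hJD.trans hDΩ⟩, hcc, hcard, hJD, hJcard⟩, hJΓ⟩
        · rintro ⟨⟨⟨hDΩ, hJΩ⟩, hcc, hcard, hJD, hJcard⟩, hJΓ⟩
          exact ⟨hcc, hcard, ⟨hJD, hJΓ⟩, hJcard⟩
      rw [Xu, hset, Set.ncard_coe_finset, Finset.card_filter]
      push_cast
      rfl
    -- expectation of Xu
    have hEX : expec p ΩF (fun Γ => (Xu L u Γ : ℝ)) = (Pairs.card : ℝ) * p ^ j := by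
      have h1 : expec p ΩF (fun Γ => (Xu L u Γ : ℝ)) = ∑ DJ ∈ Pairs, p ^ (DJ.2.card) := by
        simp only [expec, bwt]
        rw [Finset.sum_congr rfl (fun Γ hΓ => by rw [hXueq Γ hΓ])]
        exact expec_count p ΩF Pairs (fun DJ => DJ.2)
          (fun DJ hDJ => (Finset.mem_powerset.1
            (Finset.mem_product.1 (Finset.mem_filter.1 hDJ).1).2))
      rw [h1,
        Finset.sum_congr rfl (fun DJ hDJ => by rw [(Finset.mem_filter.1 hDJ).2.2.2.2]),
        Finset.sum_const, nsmul_eq_mul]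
    -- Pairs.card = Circ.card * choose u j
    have hPfst : ∀ DJ ∈ Pairs, DJ.1 ∈ Circ := by
      intro DJ hDJ
      rw [hPairsdef, Finset.mem_filter, Finset.mem_product] at hDJ
      rw [hCircdef, Finset.mem_filter]
      exact ⟨hDJ.1.1, hDJ.2.1, hDJ.2.2.1⟩
    have hPairscard : Pairs.card = Circ.card * u.choose j := by
      rw [Finset.card_eq_sum_card_fiberwise hPfst]
      have hfibc : ∀ D ∈ Circ, (Pairs.filter fun DJ => DJ.1 = D).card = u.choose j := by
        intro D hD
        rw [hCircdef, Finset.mem_filter, Finset.mem_powerset] at hD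
        obtain ⟨hDΩ, hcc, hDcard⟩ := hD
        have hbij : (Pairs.filter fun DJ => DJ.1 = D).card = (D.powersetCard j).card := by
          refine Finset.card_nbij' (fun DJ => DJ.2) (fun J => (D, J)) ?_ ?_ ?_ ?_
          · intro DJ hDJ
            rw [Finset.mem_coe, Finset.mem_filter, hPairsdef, Finset.mem_filter] at hDJ
            obtain ⟨⟨-, -, -, hJD, hJcard⟩, hfst⟩ := hDJ
            rw [Finset.mem_coe, Finset.mem_powersetCard]
            exact ⟨hfst ▸ hJD, hJcard⟩
          · intro J hJ
            rw [Finset.mem_coe, Finset.mem_powersetCard] at hJ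
            rw [Finset.mem_coe, Finset.mem_filter, hPairsdef, Finset.mem_filter, Finset.mem_product]
            exact ⟨⟨⟨Finset.mem_powerset.2 hDΩ,
              Finset.mem_powerset.2 (hJ.1.trans hDΩ)⟩, hcc, hDcard, hJ.1, hJ.2⟩, rfl⟩
          · intro DJ hDJ
            rw [Finset.mem_coe, Finset.mem_filter] at hDJ
            rw [← hDJ.2]
          · intro J hJ
            rfl
        rw [hbij, Finset.card_powersetCard, hDcard]
      rw [Finset.sum_congr rfl hfibc, Finset.sum_const, smul_eq_mul]
    -- bound on Circ.card
    have himgmem : ∀ D ∈ Circ, D.image ρ ∈ (Finset.univ : Finset (Fin m)).powersetCard u := by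
      intro D hD
      rw [hCircdef, Finset.mem_filter] at hD
      obtain ⟨-, hcc, hDcard⟩ := hD
      rw [Finset.mem_powersetCard]
      refine ⟨Finset.subset_univ _, ?_⟩
      rw [Finset.card_image_of_injOn, hDcard]
      intro x hx y hy hxy
      exact cc_injOn hρ hcc x (Finset.mem_coe.1 hx) y (Finset.mem_coe.1 hy) hxy
    have hCbound : Circ.card * (Fintype.card F - 1)
        ≤ m.choose u * (Fintype.card F ^ j - 1) := by
      rw [Finset.card_eq_sum_card_fiberwise himgmem, Finset.sum_mul]
      have hle : ∀ S ∈ (Finset.univ : Finset (Fin m)).powersetCard u,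
          (Circ.filter fun D => D.image ρ = S).card * (Fintype.card F - 1)
            ≤ Fintype.card F ^ j - 1 := by
        intro S hS
        have hScard : S.card = u := (Finset.mem_powersetCard.1 hS).2
        refine circS_bound hu0 hu1 P Q hgen L hL ρ hρ S hScard _ ?_
        intro D hD
        rw [Finset.mem_filter, hCircdef, Finset.mem_filter] at hD
        exact ⟨hD.1.2.1, hD.1.2.2, hD.2⟩
      calc ∑ S ∈ (Finset.univ : Finset (Fin m)).powersetCard u,
            (Circ.filter fun D => D.image ρ = S).card * (Fintype.card F - 1)
          ≤ ∑ _S ∈ (Finset.univ : Finset (Fin m)).powersetCard u,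
            (Fintype.card F ^ j - 1) := Finset.sum_le_sum hle
        _ = m.choose u * (Fintype.card F ^ j - 1) := by
            rw [Finset.sum_const, smul_eq_mul, Finset.card_powersetCard,
              Finset.card_univ, Fintype.card_fin]
    have hgeom := geom_bound (Fintype.card F) j (by omega) hj1
    have hCircfinal : Circ.card ≤ m.choose u * (Fintype.card F + 1) ^ (j - 1) := by
      have h2 : Circ.card * (Fintype.card F - 1)
          ≤ (m.choose u * (Fintype.card F + 1) ^ (j - 1)) * (Fintype.card F - 1) := by
        calc Circ.card * (Fintype.card F - 1)
            ≤ m.choose u * (Fintype.card F ^ j - 1) := hCbound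
          _ ≤ m.choose u * ((Fintype.card F - 1) * (Fintype.card F + 1) ^ (j - 1)) :=
              Nat.mul_le_mul_left _ hgeom
          _ = (m.choose u * (Fintype.card F + 1) ^ (j - 1)) * (Fintype.card F - 1) := by
              ring
      exact Nat.le_of_mul_le_mul_right h2 (by omega)
    -- final real arithmetic
    rw [hEX]
    have hp0' : (0:ℝ) ≤ p := le_of_lt hp0
    have hstep : (Pairs.card : ℝ) * p ^ j
        ≤ ((m.choose u * (Fintype.card F + 1) ^ (j - 1) * u.choose j : ℕ) : ℝ) * p ^ j := by
      apply mul_le_mul_of_nonneg_right _ (pow_nonneg hp0' j)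
      rw [hPairscard]
      exact_mod_cast Nat.mul_le_mul_right (u.choose j) hCircfinal
    refine hstep.trans (le_of_eq ?_)
    have hchoose : ((m.choose u : ℕ) : ℝ) * ((u.choose j : ℕ) : ℝ)
        = (m.factorial : ℝ) /
          ((j.factorial : ℝ) * ((u - j).factorial : ℝ) * ((m - u).factorial : ℝ)) := by
      rw [eq_div_iff (by positivity)]
      have h1 := Nat.choose_mul_factorial_mul_factorial hu2
      have h2 := Nat.choose_mul_factorial_mul_factorial hju
      have h3 : m.choose u * u.choose j * (j.factorial * (u - j).factorial * (m - u).factorial)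
          = m.factorial := by
        rw [← h2] at h1
        rw [← h1]
        ring
      exact_mod_cast h3
    have hpj : p ^ j = c ^ j * Qr ^ (-(α * (j : ℝ))) := by
      rw [hp, mul_pow, ← Real.rpow_natCast (Qr ^ (-α)) j, ← Real.rpow_mul hQrpos.le]
      ring_nf
    have hQpow : (((Fintype.card F + 1) ^ (j - 1) : ℕ) : ℝ) = Qr ^ ((j : ℝ) - 1) := by
      push_cast
      rw [← hQr, ← Real.rpow_natCast Qr (j - 1)]
      congr 1
      rw [Nat.cast_sub hj1, Nat.cast_one]
    have hQmerge : Qr ^ ((j : ℝ) - 1) * Qr ^ (-(α * (j : ℝ)))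
        = Qr ^ ((1 - α) * ((j : ℕ) : ℝ) - 1) := by
      rw [← Real.rpow_add hQrpos]
      congr 1
      push_cast
      ring
    push_cast
    rw [show (((Fintype.card F : ℝ) + 1) ^ (j - 1) : ℝ)
        = Qr ^ ((j : ℝ) - 1) from by push_cast at hQpow ⊢; exact hQpow]
    rw [hpj]
    rw [← hchoose]
    push_cast
    rw [← hQmerge]
    ring
end
end
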